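/- Let v ∈ C²([a,b]) with v'(a) = v'(b) = 0. Then ∫_a^b (-v'' + 6v' + 16v)(2v + v'' + 3v')² dx = ∫_a^b [-(v'')³ + 12(v'')²v - 48v²v'' + 64v³] dx + 72(v(b)³ - v(a)³). -/

import Mathlib

theorem h_g_sq_integral_plus (v : ℝ → ℝ) (a b : ℝ) (hab : a ≤ b)
    (hv : ContDiff ℝ 2 v) (ha : deriv v a = 0) (hb : deriv v b = 0) :
    ∫ x in a..b, (-(deriv (deriv v) x) + 6 * deriv v x + 16 * v x) *
        (2 * v x + deriv (deriv v) x + 3 * deriv v x) ^ 2 =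
      (∫ x in a..b, (-(deriv (deriv v) x) ^ 3 + 12 * (deriv (deriv v) x) ^ 2 * v x
          - 48 * v x ^ 2 * deriv (deriv v) x + 64 * v x ^ 3))
        + 72 * (v b ^ 3 - v a ^ 3) := by
  have hv1 : ContDiff ℝ 1 (deriv v) := by
    have := (contDiff_succ_iff_deriv (n := 1)).mp hv
    exact this.2.2
  have hcv : Continuous v := hv.continuous
  have hcp : Continuous (deriv v) := hv1.continuous
  have hcq : Continuous (deriv (deriv v)) := hv1.continuous_deriv le_rfl
  have hdv : ∀ x, HasDerivAt v (deriv v x) x := fun x =>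
    ((hv.differentiable (by norm_num)) x).hasDerivAt
  have hdp : ∀ x, HasDerivAt (deriv v) (deriv (deriv v) x) x := fun x =>
    ((hv1.differentiable (by norm_num)) x).hasDerivAt
  set f : ℝ → ℝ := fun x => (-(deriv (deriv v) x) + 6 * deriv v x + 16 * v x) *
      (2 * v x + deriv (deriv v) x + 3 * deriv v x) ^ 2 with hf
  set g : ℝ → ℝ := fun x => (-(deriv (deriv v) x) ^ 3 + 12 * (deriv (deriv v) x) ^ 2 * v x
      - 48 * v x ^ 2 * deriv (deriv v) x + 64 * v x ^ 3) with hg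
  have hcf : Continuous f := by fun_prop
  have hcg : Continuous g := by fun_prop
  have H : ∀ x ∈ Set.uIcc a b, HasDerivAt
      (fun y => 108 * v y ^ 2 * deriv v y + 54 * (v y * deriv v y ^ 2)
        + 9 * deriv v y ^ 3 + 72 * v y ^ 3) (f x - g x) x := by
    intro x _
    have h1 := hdv x
    have h2 := hdp x
    have := (((((h1.pow 2).const_mul (108:ℝ)).mul h2).add
      ((h1.mul (h2.pow 2)).const_mul (54:ℝ))).add
      ((h2.pow 3).const_mul (9:ℝ))).add ((h1.pow 3).const_mul (72:ℝ))
    refine this.congr_deriv ?_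
    simp [hf, hg]
    push_cast
    ring
  have key : ∫ x in a..b, (f x - g x) =
      (108 * v b ^ 2 * deriv v b + 54 * (v b * deriv v b ^ 2)
        + 9 * deriv v b ^ 3 + 72 * v b ^ 3)
      - (108 * v a ^ 2 * deriv v a + 54 * (v a * deriv v a ^ 2)
        + 9 * deriv v a ^ 3 + 72 * v a ^ 3) :=
    intervalIntegral.integral_eq_sub_of_hasDerivAt H
      ((hcf.sub hcg).intervalIntegrable a b)
  rw [intervalIntegral.integral_sub (hcf.intervalIntegrable a b)
    (hcg.intervalIntegrable a b)] at key
  rw [ha, hb] at key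
  linarith [key]
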